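/- Given data for the Lifting Problem, the map (k''₋, U'k'₊) ↦ (U''*k''₋, k'₊) is isometric with respect to the semi-inner product ⟨(a,b),(c,d)⟩ := ⟨a,c⟩ + ⟨Xb, c⟩ + ⟨a, Xd⟩ + ⟨b,d⟩ on K''₋ × K'₊: for all k''₋, l''₋ ∈ K''₋ and k'₊, l'₊ ∈ K'₊, ⟨k''₋, l''₋⟩ + ⟨X(U'k'₊), l''₋⟩ + ⟨k''₋, X(U'l'₊)⟩ + ⟨U'k'₊, U'l'₊⟩ = ⟨U''*k''₋, U''*l''₋⟩ + ⟨Xk'₊, U''*l''₋⟩ + ⟨U''*k''₋, Xl'₊⟩ + ⟨k'₊, l'₊⟩. (This is the statement that the map V : (k''₋, U'k'₊) ↦ (U''*k''₋, k'₊) constructed from the Lifting data is a well-defined isometry of the corresponding subspaces of the coupling Hilbert space.) -/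

import Mathlib

open ContinuousLinearMap

/-- **The isometry `V` defined by the Lifting-Problem data.**
Given Lifting-Problem data `(X, (U',K'), (U'',K''), K'₊ ⊆ K', K''₋ ⊆ K'')`, the map
`(k''₋, U'k'₊) ↦ (U''*k''₋, k'₊)` is isometric with respect to the semi-inner product
`⟨(a,b),(c,d)⟩ = ⟨a,c⟩ + ⟨Xb,c⟩ + ⟨a,Xd⟩ + ⟨b,d⟩` on `K''₋ × K'₊`. -/
theorem stmt_9 {K' K'' : Type*}
    [NormedAddCommGroup K'] [InnerProductSpace ℂ K'] [CompleteSpace K']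
    [NormedAddCommGroup K''] [InnerProductSpace ℂ K''] [CompleteSpace K'']
    (U' : K' →L[ℂ] K') (hU' : U' ∈ unitary (K' →L[ℂ] K'))
    (U'' : K'' →L[ℂ] K'') (hU'' : U'' ∈ unitary (K'' →L[ℂ] K''))
    (K'p : Submodule ℂ K') (K''m : Submodule ℂ K'')
    [CompleteSpace K'p] [CompleteSpace K''m]
    (hinv' : ∀ x ∈ K'p, U' x ∈ K'p)
    (hinv'' : ∀ x ∈ K''m, adjoint U'' x ∈ K''m)
    (X : K'p →L[ℂ] K''m) (hX : ‖X‖ ≤ 1)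
    (hXint : ∀ k : K'p,
      X ⟨U' (k : K'), hinv' (k : K') k.2⟩ = Submodule.orthogonalProjectionOnto K''m (U'' (X k : K''))) :
    ∀ (km lm : K''m) (kp lp : K'p),
      (inner ℂ (km : K'') (lm : K'') : ℂ)
        + inner ℂ ((X ⟨U' (kp : K'), hinv' (kp : K') kp.2⟩ : K''m) : K'') (lm : K'')
        + inner ℂ (km : K'') ((X ⟨U' (lp : K'), hinv' (lp : K') lp.2⟩ : K''m) : K'')
        + inner ℂ (U' (kp : K')) (U' (lp : K'))
      = (inner ℂ (adjoint U'' (km : K'')) (adjoint U'' (lm : K'')) : ℂ)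
        + inner ℂ ((X kp : K'')) (adjoint U'' (lm : K''))
        + inner ℂ (adjoint U'' (km : K'')) ((X lp : K''))
        + inner ℂ (kp : K') (lp : K') := by
  intro km lm kp lp
  have hUU'' : ∀ v : K'', U'' (adjoint U'' v) = v := by
    intro v
    have h := congrArg (fun f : K'' →L[ℂ] K'' => f v) hU''.2
    simpa [ContinuousLinearMap.star_eq_adjoint] using h
  have hU'id : ∀ v : K', adjoint U' (U' v) = v := by
    intro v
    have h := congrArg (fun f : K' →L[ℂ] K' => f v) hU'.1
    simpa [ContinuousLinearMap.star_eq_adjoint] using h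
  have h1 : (inner ℂ (adjoint U'' (km : K'')) (adjoint U'' (lm : K'')) : ℂ)
      = inner ℂ (km : K'') (lm : K'') := by
    rw [adjoint_inner_left, hUU'']
  have h2 : (inner ℂ (U' (kp : K')) (U' (lp : K')) : ℂ) = inner ℂ (kp : K') (lp : K') := by
    rw [← adjoint_inner_right, hU'id]
  have hproj : ∀ (v : K'') (w : K''m),
      (inner ℂ ((Submodule.orthogonalProjectionOnto K''m v : K''m) : K'') (w : K'') : ℂ) = inner ℂ v (w : K'') := by
    intro v w
    rw [← Submodule.coe_inner, Submodule.inner_orthogonalProjectionOnto_eq_of_mem_right]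
  have h3 : (inner ℂ ((X ⟨U' (kp : K'), hinv' (kp : K') kp.2⟩ : K''m) : K'') (lm : K'') : ℂ)
      = inner ℂ ((X kp : K'')) (adjoint U'' (lm : K'')) := by
    rw [hXint kp, hproj, ← adjoint_inner_right]
  have h4 : (inner ℂ (km : K'') ((X ⟨U' (lp : K'), hinv' (lp : K') lp.2⟩ : K''m) : K'') : ℂ)
      = inner ℂ (adjoint U'' (km : K'')) ((X lp : K'')) := by
    rw [← inner_conj_symm, hXint lp, hproj, ← adjoint_inner_right, inner_conj_symm]
  rw [h1, h2, h3, h4]
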